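/- For Borel probability measures μ, ν on ℝ, let d_KS(μ, ν) = sup_{x∈ℝ} |F_μ(x) − F_ν(x)| denote the Kolmogorov–Smirnov distance, where F_μ is the cumulative distribution function of μ. Let P, P', P̂, P̂' be Borel probability measures on ℝ, let n_min, n_max, n_e, n_f be positive integers with n_min ≤ n_e ≤ n_max and n_min ≤ n_f ≤ n_max, and let c ≥ 0, κ ≥ 0 be reals. If sqrt(n_e n_f / (n_e + n_f)) · d_KS(P̂, P̂') ≤ c and d_KS(P, P') ≥ κ, then d_KS(P̂, P) ≥ κ/2 − sqrt(n_max) c / (sqrt(2) n_min) or d_KS(P̂', P') ≥ κ/2 − sqrt(n_max) c / (sqrt(2) n_min). -/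

import Mathlib

open MeasureTheory ProbabilityTheory

/-- The Kolmogorov–Smirnov distance between two Borel probability measures on `ℝ`:
the sup-norm distance of their cumulative distribution functions. -/
noncomputable def dKS (μ ν : Measure ℝ) : ℝ :=
  ⨆ x : ℝ, |cdf μ x - cdf ν x|

lemma dKS_bdd (μ ν : Measure ℝ) :
    BddAbove (Set.range fun x => |cdf μ x - cdf ν x|) := by
  refine ⟨1, ?_⟩
  rintro _ ⟨x, rfl⟩
  have h1 := cdf_nonneg μ x
  have h2 := cdf_le_one μ x
  have h3 := cdf_nonneg ν x
  have h4 := cdf_le_one ν x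
  rw [abs_sub_le_iff]
  constructor <;> linarith

lemma dKS_nonneg (μ ν : Measure ℝ) : 0 ≤ dKS μ ν :=
  (abs_nonneg _).trans (le_ciSup (dKS_bdd μ ν) 0)

lemma dKS_symm (μ ν : Measure ℝ) : dKS μ ν = dKS ν μ := by
  simp [dKS, abs_sub_comm]

lemma dKS_triangle (μ ρ ν : Measure ℝ) : dKS μ ν ≤ dKS μ ρ + dKS ρ ν := by
  refine ciSup_le fun x => ?_
  calc |cdf μ x - cdf ν x| ≤ |cdf μ x - cdf ρ x| + |cdf ρ x - cdf ν x| := abs_sub_le _ _ _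
    _ ≤ dKS μ ρ + dKS ρ ν := add_le_add (le_ciSup (dKS_bdd μ ρ) x) (le_ciSup (dKS_bdd ρ ν) x)

/-- **Key deterministic inequality in the proof of Theorem C.1 (false discovery bound).**
If the two-sample Kolmogorov–Smirnov statistic between the estimates `P̂, P̂'` is at most `c`
while the true measures `P, P'` are `κ`-separated in KS distance, then at least one of the
estimation errors is at least `κ/2 − √(n_max) c / (√2 n_min)`. -/
theorem stmt12 (P P' Phat Phat' : Measure ℝ)
    [IsProbabilityMeasure P] [IsProbabilityMeasure P']
    [IsProbabilityMeasure Phat] [IsProbabilityMeasure Phat']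
    (nmin nmax nE nF : ℕ)
    (hmin : 0 < nmin) (hE1 : nmin ≤ nE) (hE2 : nE ≤ nmax)
    (hF1 : nmin ≤ nF) (hF2 : nF ≤ nmax)
    (c κ : ℝ) (hc : 0 ≤ c) (hκ : 0 ≤ κ)
    (hstat : Real.sqrt ((nE * nF : ℝ) / (nE + nF)) * dKS Phat Phat' ≤ c)
    (hsep : κ ≤ dKS P P') :
    κ / 2 - Real.sqrt nmax * c / (Real.sqrt 2 * nmin) ≤ dKS Phat P ∨
    κ / 2 - Real.sqrt nmax * c / (Real.sqrt 2 * nmin) ≤ dKS Phat' P' := by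
  have hminR : (0:ℝ) < nmin := by exact_mod_cast hmin
  have hER : (nmin:ℝ) ≤ nE := by exact_mod_cast hE1
  have hFR : (nmin:ℝ) ≤ nF := by exact_mod_cast hF1
  have hE2R : (nE:ℝ) ≤ nmax := by exact_mod_cast hE2
  have hF2R : (nF:ℝ) ≤ nmax := by exact_mod_cast hF2
  have hmaxR : (0:ℝ) < nmax := lt_of_lt_of_le hminR (hER.trans hE2R)
  have hsum : (0:ℝ) < (nE:ℝ) + nF := by
    have : 0 < nE + nF := Nat.add_pos_left (hmin.trans_le hE1) nF
    exact_mod_cast this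
  -- key ratio bound: nmin^2 / (2 nmax) ≤ nE nF / (nE + nF)
  have hratio : (nmin:ℝ)^2 / (2 * nmax) ≤ (nE * nF : ℝ) / (nE + nF) := by
    rw [div_le_div_iff₀ (by positivity) hsum]
    nlinarith [mul_le_mul hER hFR (le_of_lt hminR) (hminR.le.trans hER)]
  have hs : (nmin:ℝ) / Real.sqrt (2 * nmax) ≤ Real.sqrt ((nE * nF : ℝ) / (nE + nF)) := by
    have : Real.sqrt ((nmin:ℝ)^2 / (2 * nmax)) ≤ Real.sqrt ((nE * nF : ℝ) / (nE + nF)) :=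
      Real.sqrt_le_sqrt hratio
    rwa [Real.sqrt_div' ((nmin:ℝ)^2) (by positivity), Real.sqrt_sq hminR.le] at this
  have hspos : (0:ℝ) < Real.sqrt ((nE * nF : ℝ) / (nE + nF)) :=
    lt_of_lt_of_le (div_pos hminR (Real.sqrt_pos.mpr (by positivity))) hs
  have hd : dKS Phat Phat' ≤ c / ((nmin:ℝ) / Real.sqrt (2 * nmax)) := by
    rw [le_div_iff₀ (div_pos hminR (Real.sqrt_pos.mpr (by positivity)))]
    calc dKS Phat Phat' * ((nmin:ℝ) / Real.sqrt (2 * nmax))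
        ≤ dKS Phat Phat' * Real.sqrt ((nE * nF : ℝ) / (nE + nF)) :=
          mul_le_mul_of_nonneg_left hs (dKS_nonneg _ _)
      _ ≤ c := by rw [mul_comm]; exact hstat
  have hd2 : dKS Phat Phat' ≤ 2 * (Real.sqrt nmax * c / (Real.sqrt 2 * nmin)) := by
    refine hd.trans (le_of_eq ?_)
    have h2 : Real.sqrt 2 ^ 2 = 2 := Real.sq_sqrt (by norm_num)
    have hs2 : (0:ℝ) < Real.sqrt 2 := by positivity
    have hsn : (0:ℝ) < Real.sqrt nmax := by positivity
    rw [Real.sqrt_mul (by norm_num : (0:ℝ) ≤ 2)]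
    field_simp
    linear_combination c * h2
  by_contra h
  push_neg at h
  obtain ⟨h1, h2⟩ := h
  have t1 := dKS_triangle P Phat P'
  have t2 := dKS_triangle Phat Phat' P'
  rw [dKS_symm P Phat] at t1
  linarith
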